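/- If integers a, b, k, x, y satisfy a*x^2 + 2*b*x*y - k*a*y^2 = 1 or a*x^2 + 2*b*x*y - k*a*y^2 = -1, then setting δ = k*a^2 + b^2, the pair X = -b*x^2 + 2*a*k*x*y + k*b*y^2, Y = x^2 + k*y^2 satisfies X^2 - δ*Y^2 = -k. -/
import Mathlib

theorem bapoungue_theorem (a b k x y : ℤ)
    (h : a*x^2 + 2*b*x*y - k*a*y^2 = 1 ∨ a*x^2 + 2*b*x*y - k*a*y^2 = -1) :
    (-b*x^2 + 2*a*k*x*y + k*b*y^2)^2 - (k*a^2 + b^2)*(x^2 + k*y^2)^2 = -k := by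
  have key : (-b*x^2 + 2*a*k*x*y + k*b*y^2)^2 - (k*a^2 + b^2)*(x^2 + k*y^2)^2
      = -k * (a*x^2 + 2*b*x*y - k*a*y^2)^2 := by ring
  rcases h with h | h <;> rw [key, h] <;> ring
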